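/- Let $\mathbf{H} \in \mathbb{R}^{n\times n}$ be symmetric positive definite, $\mathbf{b} \in \mathbb{R}^n$, and let $\mathbf{x}_1 = \mathbf{x}_0 - \alpha_0^{SD}\mathbf{g}_0$ and $\mathbf{x}_2 = \mathbf{x}_1 - \alpha_1^{SD}\mathbf{g}_1$, where $\mathbf{g}_k = \mathbf{H}\mathbf{x}_k + \mathbf{b} \ne \mathbf{0}$ for $k = 0, 1$ and $\alpha_k^{SD} = \mathbf{g}_k^T\mathbf{g}_k/(\mathbf{g}_k^T\mathbf{H}\mathbf{g}_k)$. Then $\mathbf{g}_0^T\mathbf{H}\mathbf{g}_1 = -\mathbf{g}_0^T\mathbf{g}_2 / \alpha_1^{SD}$, and consequently $\left(\frac{\mathbf{g}_0^T\mathbf{H}\mathbf{g}_1}{\|\mathbf{g}_0\|\,\|\mathbf{g}_1\|}\right)^2 = \beta\gamma$, where $\beta = \frac{\|\mathbf{g}_2\|^2}{(\alpha_1^{SD})^2\|\mathbf{g}_1\|^2}$ and $\gamma = \frac{(\mathbf{g}_2^T\mathbf{g}_0)^2}{\|\mathbf{g}_0\|^2\|\mathbf{g}_2\|^2}$. -/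

import Mathlib

open Matrix

/-- The `(1,2)` entry of the transformed Hessian (equation (2.6) of the paper):
after two exact (Cauchy) line search steps on `f(x) = ½xᵀHx + bᵀx`,
`g₀ᵀHg₁ = -g₀ᵀg₂/α₁^{SD}`, and consequently
`(g₀ᵀHg₁/(‖g₀‖‖g₁‖))² = βγ` with `β = ‖g₂‖²/((α₁^{SD})²‖g₁‖²)` and
`γ = (g₂ᵀg₀)²/(‖g₀‖²‖g₂‖²)`. -/
theorem stmt_12 (n : ℕ) (H : Matrix (Fin n) (Fin n) ℝ) (hH : H.PosDef)
    (b x0 x1 x2 g0 g1 g2 : Fin n → ℝ)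
    (hg0 : g0 = H *ᵥ x0 + b) (hg0ne : g0 ≠ 0)
    (α0 α1 : ℝ)
    (hα0 : α0 = (g0 ⬝ᵥ g0) / (g0 ⬝ᵥ (H *ᵥ g0)))
    (hx1 : x1 = x0 - α0 • g0)
    (hg1 : g1 = H *ᵥ x1 + b) (hg1ne : g1 ≠ 0)
    (hα1 : α1 = (g1 ⬝ᵥ g1) / (g1 ⬝ᵥ (H *ᵥ g1)))
    (hx2 : x2 = x1 - α1 • g1)
    (hg2 : g2 = H *ᵥ x2 + b)
    (β γ : ℝ)
    (hβ : β = (g2 ⬝ᵥ g2) / (α1 ^ 2 * (g1 ⬝ᵥ g1)))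
    (hγ : γ = (g2 ⬝ᵥ g0) ^ 2 / ((g0 ⬝ᵥ g0) * (g2 ⬝ᵥ g2))) :
    g0 ⬝ᵥ (H *ᵥ g1) = -(g0 ⬝ᵥ g2) / α1 ∧
    ((g0 ⬝ᵥ (H *ᵥ g1)) / (Real.sqrt (g0 ⬝ᵥ g0) * Real.sqrt (g1 ⬝ᵥ g1))) ^ 2
      = β * γ := by
  have hquad : ∀ x : Fin n → ℝ, x ≠ 0 → 0 < x ⬝ᵥ (H *ᵥ x) := by
    intro x hx
    simpa using hH.dotProduct_mulVec_pos hx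
  have hHg0 : 0 < g0 ⬝ᵥ (H *ᵥ g0) := hquad g0 hg0ne
  have hHg1 : 0 < g1 ⬝ᵥ (H *ᵥ g1) := hquad g1 hg1ne
  have ha : 0 < g0 ⬝ᵥ g0 := by
    have := Matrix.dotProduct_self_star_pos_iff (v := g0) |>.2 hg0ne
    simpa using this
  have hc : 0 < g1 ⬝ᵥ g1 := by
    have := Matrix.dotProduct_self_star_pos_iff (v := g1) |>.2 hg1ne
    simpa using this
  have hα1pos : 0 < α1 := by
    rw [hα1]; positivity
  have hg1' : g1 = g0 - α0 • (H *ᵥ g0) := by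
    rw [hg1, hx1, hg0, Matrix.mulVec_sub, Matrix.mulVec_smul]
    abel
  have hg2' : g2 = g1 - α1 • (H *ᵥ g1) := by
    rw [hg2, hx2, hg1, Matrix.mulVec_sub, Matrix.mulVec_smul]
    abel
  have horth : g0 ⬝ᵥ g1 = 0 := by
    rw [hg1', dotProduct_sub, dotProduct_smul, hα0, smul_eq_mul]
    field_simp
    ring
  have hkey : g0 ⬝ᵥ g2 = -(α1 * (g0 ⬝ᵥ (H *ᵥ g1))) := by
    rw [hg2', dotProduct_sub, dotProduct_smul, horth, smul_eq_mul]
    ring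
  have h1 : g0 ⬝ᵥ (H *ᵥ g1) = -(g0 ⬝ᵥ g2) / α1 := by
    rw [hkey]; field_simp
  refine ⟨h1, ?_⟩
  have hsa : Real.sqrt (g0 ⬝ᵥ g0) ^ 2 = g0 ⬝ᵥ g0 := Real.sq_sqrt ha.le
  have hsc : Real.sqrt (g1 ⬝ᵥ g1) ^ 2 = g1 ⬝ᵥ g1 := Real.sq_sqrt hc.le
  have hcomm : g2 ⬝ᵥ g0 = g0 ⬝ᵥ g2 := dotProduct_comm _ _
  by_cases hd : g2 ⬝ᵥ g2 = 0
  · have hz : g2 = 0 := dotProduct_self_eq_zero.mp hd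
    rw [h1, hβ, hγ, hcomm, hz]
    simp
  · rw [h1, hβ, hγ, hcomm, div_pow, mul_pow, hsa, hsc]
    field_simp
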